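/- Define M over 𝔽₂ indexed by nonzero vectors of 𝔽₂^{2m} by M_{uv} = 1 + σ(u,v). Then M fits the complement condition for the symplectic graph Sp(2m,𝔽₂) (i.e., M_{uu} = 1 and M_{uv} = 0 whenever u ≠ v are non-adjacent in Sp(2m,𝔽₂)) and has rank at most 2m + 1. -/

import Mathlib

open Finset

/-- The canonical symplectic form `σ(u,v) = uᵀ [[0, Iₘ], [-Iₘ, 0]] v` on `𝔽₂^{2m}`,
with vectors written as pairs in `(𝔽₂^m) × (𝔽₂^m)`. -/
def sympForm (m : ℕ) (u v : (Fin m → ZMod 2) × (Fin m → ZMod 2)) : ZMod 2 :=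
  (∑ i, u.1 i * v.2 i) - ∑ i, u.2 i * v.1 i

/-- The symplectic graph `Sp(2m, 𝔽₂)`: vertices are the nonzero vectors of `𝔽₂^{2m}`,
with distinct vertices adjacent iff the symplectic form vanishes on them. -/
def sympGraph (m : ℕ) :
    SimpleGraph {v : (Fin m → ZMod 2) × (Fin m → ZMod 2) // v ≠ 0} where
  Adj u v := u ≠ v ∧ sympForm m u.1 v.1 = 0
  symm := by
    constructor
    rintro u v ⟨h, hs⟩
    refine ⟨h.symm, ?_⟩
    have h1 : ∀ f g : Fin m → ZMod 2, ∑ i, f i * g i = ∑ i, g i * f i :=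
      fun f g => Finset.sum_congr rfl fun i _ => mul_comm _ _
    unfold sympForm at hs ⊢
    rw [h1 v.1.1 u.1.2, h1 v.1.2 u.1.1]
    linear_combination -hs
  loopless := ⟨fun u h => h.1 rfl⟩

/-- The matrix `M u v = 1 + σ(u,v)` over `𝔽₂`, indexed by the nonzero vectors of `𝔽₂^{2m}`,
has all diagonal entries `1`, vanishes on distinct non-adjacent pairs of `Sp(2m,𝔽₂)`,
and has rank at most `2m + 1`. -/
theorem sympGraph_fitting_matrix (m : ℕ) :
    let M : Matrix {v : (Fin m → ZMod 2) × (Fin m → ZMod 2) // v ≠ 0}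
        {v : (Fin m → ZMod 2) × (Fin m → ZMod 2) // v ≠ 0} (ZMod 2) :=
      fun u v => 1 + sympForm m u.1 v.1
    (∀ u, M u u = 1) ∧
    (∀ u v, u ≠ v → ¬ (sympGraph m).Adj u v → M u v = 0) ∧
    M.rank ≤ 2 * m + 1 := by
  intro M
  refine ⟨?_, ?_, ?_⟩
  · intro u
    have : sympForm m u.1 u.1 = 0 := by
      unfold sympForm
      rw [Finset.sum_congr rfl fun i _ => mul_comm (u.1.1 i) (u.1.2 i)]
      ring
    simp [M, this]
  · intro u v huv hadj
    have hs : sympForm m u.1 v.1 ≠ 0 := fun h => hadj ⟨huv, h⟩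
    have h2 : ∀ x : ZMod 2, x ≠ 0 → x = 1 := by decide
    show 1 + sympForm m u.1 v.1 = 0
    rw [h2 _ hs]; decide
  · let ι := {v : (Fin m → ZMod 2) × (Fin m → ZMod 2) // v ≠ 0}
    let L : Matrix ι (Unit ⊕ Fin m ⊕ Fin m) (ZMod 2) := fun u k =>
      Sum.rec (fun _ => 1) (Sum.rec (fun i => u.1.1 i) (fun i => -u.1.2 i)) k
    let R : Matrix (Unit ⊕ Fin m ⊕ Fin m) ι (ZMod 2) := fun k v =>
      Sum.rec (fun _ => 1) (Sum.rec (fun i => v.1.2 i) (fun i => v.1.1 i)) k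
    have hM : M = L * R := by
      ext u v
      have : M u v = 1 + sympForm m u.1 v.1 := rfl
      rw [this]
      rw [Matrix.mul_apply]
      simp only [Fintype.sum_sum_type, L, R]
      unfold sympForm
      simp only [Finset.sum_neg_distrib, neg_mul, mul_one, sub_eq_add_neg,
        Finset.univ_unique, Finset.sum_singleton]
    calc M.rank = (L * R).rank := by rw [hM]
      _ ≤ L.rank := Matrix.rank_mul_le_left L R
      _ ≤ Fintype.card (Unit ⊕ Fin m ⊕ Fin m) := Matrix.rank_le_card_width L
      _ = 2 * m + 1 := by simp [Fintype.card_sum]; ring
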